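/- For 0 \le i < j \le d one has F_i E^*_j = (\theta^*_j - \theta^*_i)^{-1} \mathcal{L} F_{i+1} E^*_j. -/

import Mathlib

/-- For `0 ≤ i < j ≤ d`, `F_i E*_j = (θ*_j - θ*_i)⁻¹ 𝓛 F_{i+1} E*_j`. -/
theorem stmt2 {F V : Type*} [Field F] [AddCommGroup V] [Module F V]
    [FiniteDimensional F V] (d : ℕ) (hd : 1 ≤ d)
    (As : Module.End F V) (Es Fi : ℕ → Module.End F V) (θs : ℕ → F)
    (hEsEs : ∀ i ≤ d, ∀ j ≤ d, Es i * Es j = if i = j then Es i else 0)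
    (hEssum : ∑ i ∈ Finset.range (d + 1), Es i = 1)
    (hAs : As = ∑ i ∈ Finset.range (d + 1), θs i • Es i)
    (hdist : ∀ i ≤ d, ∀ j ≤ d, i ≠ j → θs i ≠ θs j)
    (hFF : ∀ i ≤ d, ∀ j ≤ d, Fi i * Fi j = if i = j then Fi i else 0)
    (hFsum : ∑ i ∈ Finset.range (d + 1), Fi i = 1)
    (L : Module.End F V)
    (hL : L = As - ∑ i ∈ Finset.range (d + 1), θs i • Fi i)
    (hFL : ∀ i, i + 1 ≤ d → Fi i * L = L * Fi (i + 1)) :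
    ∀ i j, i < j → j ≤ d →
      Fi i * Es j = (θs j - θs i)⁻¹ • (L * (Fi (i + 1) * Es j)) := by
  intro i j hij hj
  have hi : i ≤ d := (Nat.le_of_lt hij).trans hj
  have hi1 : i + 1 ≤ d := le_trans hij hj
  -- A* E_j = θ_j E_j
  have hAE : As * Es j = θs j • Es j := by
    rw [hAs, Finset.sum_mul, Finset.sum_eq_single j]
    · rw [smul_mul_assoc, hEsEs j hj j hj]; simp
    · intro k hk hkj
      rw [smul_mul_assoc, hEsEs k (Nat.lt_succ_iff.mp (Finset.mem_range.mp hk)) j hj]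
      simp [hkj]
    · intro h; exact absurd (Finset.mem_range.mpr (Nat.lt_succ_of_le hj)) h
  -- F_i Σ θ_k F_k = θ_i F_i
  have hFS : Fi i * (∑ k ∈ Finset.range (d + 1), θs k • Fi k) = θs i • Fi i := by
    rw [Finset.mul_sum, Finset.sum_eq_single i]
    · rw [mul_smul_comm, hFF i hi i hi]; simp
    · intro k hk hki
      rw [mul_smul_comm, hFF i hi k (Nat.lt_succ_iff.mp (Finset.mem_range.mp hk))]
      simp [Ne.symm hki]
    · intro h; exact absurd (Finset.mem_range.mpr (Nat.lt_succ_of_le hi)) h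
  -- F_i A* = L F_{i+1} + θ_i F_i
  have key : Fi i * As = L * Fi (i + 1) + θs i • Fi i := by
    have h1 : Fi i * L = Fi i * As - θs i • Fi i := by
      rw [hL, mul_sub, hFS]
    rw [← hFL i hi1, h1]; abel
  have h2 : Fi i * As * Es j = θs j • (Fi i * Es j) := by
    rw [mul_assoc, hAE, mul_smul_comm]
  have h3 : (θs j - θs i) • (Fi i * Es j) = L * (Fi (i + 1) * Es j) := by
    have := congrArg (· * Es j) key
    simp only [add_mul, smul_mul_assoc, mul_assoc] at this
    rw [← mul_assoc, h2] at this
    rw [sub_smul, this]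
    abel
  have hne : θs j - θs i ≠ 0 :=
    sub_ne_zero.mpr (hdist j hj i hi (Nat.ne_of_gt hij))
  rw [← h3, inv_smul_smul₀ hne]
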